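/- In the two-list (L = 2) latent heterogeneity model with marginal cell probabilities p_x = E[λ^{|x|}(1−λ)^{2−|x|}] for a random variable λ ~ F supported on (0,1], the full-way interaction term satisfies γ = log( (E[λ(1−λ)])^2 / (E[λ^2] · E[(1−λ)^2]) ), and by the Cauchy–Schwarz inequality γ ≤ 0, with strict inequality γ < 0 whenever λ is not almost surely constant. -/

import Mathlib

open MeasureTheory Filter

/-- A list inclusion pattern on `L` lists. -/
abbrev Pattern (L : ℕ) := Fin L → Bool

/-- `|x|`, the number of lists on which the pattern `x` appears. -/
def weight {L : ℕ} (x : Pattern L) : ℕ := (Finset.univ.filter fun i => x i = true).card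

/-- The full-way interaction term `γ = ∑_{x ∈ {0,1}^L} (-1)^{|x|+1} log p_x`. -/
noncomputable def fullInteraction {L : ℕ} (p : Pattern L → ℝ) : ℝ :=
  ∑ x : Pattern L, (-1 : ℝ) ^ (weight x + 1) * Real.log (p x)

theorem two_list_heterogeneity_gamma_nonpositive
    (F : Measure ℝ) [IsProbabilityMeasure F] (hF : F ((Set.Ioc (0 : ℝ) 1)ᶜ) = 0)
    (p : Pattern 2 → ℝ)
    (hpdef : ∀ x, p x = ∫ l, l ^ (weight x) * (1 - l) ^ (2 - weight x) ∂F)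
    (hp : ∀ x, 0 < p x) :
    fullInteraction p =
        Real.log ((∫ l, l * (1 - l) ∂F) ^ 2 / ((∫ l, l ^ 2 ∂F) * (∫ l, (1 - l) ^ 2 ∂F))) ∧
      fullInteraction p ≤ 0 ∧
      ((¬ ∃ c : ℝ, ∀ᵐ l ∂F, l = c) → fullInteraction p < 0) := by
  have hmem : ∀ᵐ l ∂F, l ∈ Set.Ioc (0:ℝ) 1 := by
    rw [ae_iff]
    exact hF
  set A := ∫ l, l ^ 2 ∂F with hAdef
  set B := ∫ l, l * (1 - l) ∂F with hBdef
  set C := ∫ l, (1 - l) ^ 2 ∂F with hCdef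
  -- integrability
  have hintA : Integrable (fun l : ℝ => l ^ 2) F := by
    refine (integrable_const (1:ℝ)).mono' (Continuous.aestronglyMeasurable (by continuity)) ?_
    filter_upwards [hmem] with l hl
    rw [Real.norm_eq_abs, abs_of_nonneg (by positivity)]
    nlinarith [hl.1, hl.2]
  have hintB : Integrable (fun l : ℝ => l * (1 - l)) F := by
    refine (integrable_const (1:ℝ)).mono' (Continuous.aestronglyMeasurable (by continuity)) ?_
    filter_upwards [hmem] with l hl
    rw [Real.norm_eq_abs, abs_of_nonneg (by nlinarith [hl.1, hl.2])]
    nlinarith [hl.1, hl.2]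
  have hintC : Integrable (fun l : ℝ => (1 - l) ^ 2) F := by
    refine (integrable_const (1:ℝ)).mono' (Continuous.aestronglyMeasurable (by continuity)) ?_
    filter_upwards [hmem] with l hl
    rw [Real.norm_eq_abs, abs_of_nonneg (by positivity)]
    nlinarith [hl.1, hl.2]
  -- positivity of A, B, C
  have wA : weight (fun _ : Fin 2 => true) = 2 := by decide
  have wB1 : weight ![true, false] = 1 := by decide
  have wB2 : weight ![false, true] = 1 := by decide
  have wC : weight (fun _ : Fin 2 => false) = 0 := by decide
  have hpA : p (fun _ : Fin 2 => true) = A := by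
    rw [hpdef, wA]; simp; exact hAdef.symm
  have hpB1 : p ![true, false] = B := by
    rw [hpdef, wB1]; simp; exact hBdef.symm
  have hpB2 : p ![false, true] = B := by
    rw [hpdef, wB2]; simp; exact hBdef.symm
  have hpC : p (fun _ : Fin 2 => false) = C := by
    rw [hpdef, wC]; simp; exact hCdef.symm
  have hA : 0 < A := hpA ▸ hp _
  have hB : 0 < B := hpB1 ▸ hp _
  have hC : 0 < C := hpC ▸ hp _
  -- expansion of the quadratic
  have hexp : ∀ t : ℝ, ∫ l, ((1 - l) - t * l) ^ 2 ∂F = C - (2 * t) * B + t ^ 2 * A := by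
    intro t
    have hfe : (fun l : ℝ => ((1 - l) - t * l) ^ 2)
        = fun l => ((1 - l) ^ 2 - (2 * t) * (l * (1 - l))) + t ^ 2 * l ^ 2 := by
      funext l; ring
    have h1 : Integrable (fun l : ℝ => (1 - l) ^ 2 - 2 * t * (l * (1 - l))) F :=
      hintC.sub (hintB.const_mul _)
    have h2 : Integrable (fun l : ℝ => t ^ 2 * l ^ 2) F := hintA.const_mul _
    have h3 : Integrable (fun l : ℝ => 2 * t * (l * (1 - l))) F := hintB.const_mul _
    rw [hfe, integral_add h1 h2, integral_sub hintC h3, integral_const_mul, integral_const_mul]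
  have hQint : ∀ t : ℝ, Integrable (fun l : ℝ => ((1 - l) - t * l) ^ 2) F := by
    intro t
    have hfe : (fun l : ℝ => ((1 - l) - t * l) ^ 2)
        = fun l => ((1 - l) ^ 2 - (2 * t) * (l * (1 - l))) + t ^ 2 * l ^ 2 := by
      funext l; ring
    rw [hfe]
    exact (hintC.sub (hintB.const_mul _)).add (hintA.const_mul _)
  -- Cauchy–Schwarz
  have hCS : B ^ 2 ≤ A * C := by
    have hQ : 0 ≤ ∫ l, ((1 - l) - (B / A) * l) ^ 2 ∂F :=
      integral_nonneg fun l => sq_nonneg _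
    rw [hexp] at hQ
    have ht : B / A * A = B := div_mul_cancel₀ _ hA.ne'
    nlinarith [hQ, ht, hA, sq_nonneg (B / A)]
  -- the sum over patterns
  have huniv : (Finset.univ : Finset (Pattern 2))
      = {![false, false], ![false, true], ![true, false], ![true, true]} := by decide
  have hγ : fullInteraction p = Real.log (B ^ 2 / (A * C)) := by
    have e1 : (![false, false] : Pattern 2) = fun _ => false := by funext i; fin_cases i <;> rfl
    have e2 : (![true, true] : Pattern 2) = fun _ => true := by funext i; fin_cases i <;> rfl
    rw [fullInteraction, huniv]
    rw [Finset.sum_insert (by decide), Finset.sum_insert (by decide),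
      Finset.sum_insert (by decide), Finset.sum_singleton]
    rw [e1, e2, hpA, hpB1, hpB2, hpC, wA, wB1, wB2, wC,
      Real.log_div (by positivity) (by positivity), Real.log_mul hA.ne' hC.ne', Real.log_pow]
    push_cast
    ring
  have hratio_pos : 0 < B ^ 2 / (A * C) := by positivity
  have hratio_le : B ^ 2 / (A * C) ≤ 1 := (div_le_one (by positivity)).mpr hCS
  refine ⟨hγ, hγ ▸ Real.log_nonpos hratio_pos.le hratio_le, ?_⟩
  intro hnc
  rw [hγ]
  refine Real.log_neg hratio_pos ?_
  rw [div_lt_one (by positivity)]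
  rcases lt_or_eq_of_le hCS with h | heq
  · exact h
  -- equality case: λ is a.e. constant, contradiction
  exfalso
  set t := B / A with htdef
  have ht : t * A = B := div_mul_cancel₀ _ hA.ne'
  have htB : t * B = C := by
    rw [htdef, div_mul_eq_mul_div, ← sq, heq, mul_comm, mul_div_assoc, div_self hA.ne', mul_one]
  have hQ0 : ∫ l, ((1 - l) - t * l) ^ 2 ∂F = 0 := by
    rw [hexp]
    nlinarith [ht, htB]
  have hzero : (fun l : ℝ => ((1 - l) - t * l) ^ 2) =ᵐ[F] 0 :=
    (integral_eq_zero_iff_of_nonneg (fun l => sq_nonneg _) (hQint t)).mp hQ0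
  have hall : ∀ᵐ l ∂F, l * (1 + t) = 1 := by
    filter_upwards [hzero] with l hl
    have h0 : (1 - l) - t * l = 0 := by
      have := pow_eq_zero_iff (n := 2) (by norm_num) |>.mp hl
      exact this
    linear_combination -h0
  haveI : (ae F).NeBot := ae_neBot.mpr (IsProbabilityMeasure.ne_zero F)
  obtain ⟨l₀, hl₀⟩ := hall.exists
  have hne : (1 + t) ≠ 0 := by
    intro h; rw [h, mul_zero] at hl₀; exact one_ne_zero hl₀.symm
  exact hnc ⟨1 / (1 + t), by
    filter_upwards [hall] with l hl
    field_simp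
    linarith [hl]⟩
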